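/- Let F : 2^V → ℝ₊ be a normalized non-decreasing set function that is γ-weakly submodular for parameter γ ∈ (0,1] (i.e., γ·(F(S ∪ L) - F(L)) ≤ Σ_{i∈S} (F(L ∪ {i}) - F(L)) for all disjoint L, S ⊆ V with |S| ≤ k). Then the greedy algorithm with budget k returns Ŝ satisfying F(Ŝ) ≥ (1 - e^{-γ}) · max_{|S| ≤ k} F(S). -/

import Mathlib

/-- Greedy guarantee for normalized non-decreasing `γ`-weakly submodular functions:
`F (Ŝ) ≥ (1 - e^{-γ}) max_{|T| ≤ k} F T`. -/
theorem stmt1 (d k : ℕ) (F : Finset (Fin d) → ℝ) (γ : ℝ)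
    (hγ0 : 0 < γ) (hγ1 : γ ≤ 1)
    (hnorm : F ∅ = 0) (hnonneg : ∀ S, 0 ≤ F S)
    (hmono : ∀ S T : Finset (Fin d), S ⊆ T → F S ≤ F T)
    (hweak : ∀ L T : Finset (Fin d), Disjoint L T → T.card ≤ k →
      γ * (F (L ∪ T) - F L) ≤ ∑ i ∈ T, (F (insert i L) - F L))
    (S : ℕ → Finset (Fin d)) (hS0 : S 0 = ∅)
    (hstep : ∀ t < k, ∃ i ∉ S t, S (t + 1) = insert i (S t) ∧
      ∀ j ∉ S t, F (insert j (S t)) ≤ F (insert i (S t))) :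
    ∀ T : Finset (Fin d), T.card ≤ k →
      (1 - Real.exp (-γ)) * F T ≤ F (S k) := by
  intro T hT
  rcases Nat.eq_zero_or_pos k with hk | hk
  · subst hk
    have hTe : T = ∅ := Finset.card_eq_zero.mp (Nat.le_zero.mp hT)
    subst hTe
    rw [hS0, hnorm]
    simp
  · have hkR : (0:ℝ) < k := by exact_mod_cast hk
    have hk1 : (1:ℝ) ≤ k := by exact_mod_cast hk
    set c : ℝ := 1 - γ / k with hc
    have hc0 : 0 ≤ c := by
      have hd : γ / k ≤ 1 := by
        rw [div_le_one hkR]; linarith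
      rw [hc]; linarith
    have key : ∀ t, t ≤ k → F T - F (S t) ≤ c ^ t * F T := by
      intro t
      induction t with
      | zero => intro _; simp [hS0, hnorm]
      | succ t ih =>
        intro ht
        have ht' : t < k := ht
        have ih' := ih (le_of_lt ht')
        obtain ⟨i, hi, hSsucc, hmax⟩ := hstep t ht'
        set δ := F (S (t+1)) - F (S t) with hδ
        have hδ0 : 0 ≤ δ := by
          have := hmono (S t) (S (t+1)) (by rw [hSsucc]; exact Finset.subset_insert _ _)
          simp only [hδ]; linarith
        have hdisj : Disjoint (S t) (T \ S t) := Finset.disjoint_sdiff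
        have hcard : (T \ S t).card ≤ k :=
          le_trans (Finset.card_le_card Finset.sdiff_subset) hT
        have hw := hweak (S t) (T \ S t) hdisj hcard
        have hunion : S t ∪ (T \ S t) = S t ∪ T := Finset.union_sdiff_self_eq_union
        have hFT : F T ≤ F (S t ∪ (T \ S t)) := by
          rw [hunion]; exact hmono T _ Finset.subset_union_right
        have hSval : F (S (t+1)) = F (insert i (S t)) := by rw [hSsucc]
        have hsum : ∑ j ∈ T \ S t, (F (insert j (S t)) - F (S t)) ≤ (T \ S t).card * δ := by
          calc ∑ j ∈ T \ S t, (F (insert j (S t)) - F (S t))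
              ≤ ∑ _j ∈ T \ S t, δ := by
                apply Finset.sum_le_sum
                intro j hj
                have hjn : j ∉ S t := (Finset.mem_sdiff.mp hj).2
                have := hmax j hjn
                simp only [hδ, hSval]
                linarith
          _ = (T \ S t).card * δ := by rw [Finset.sum_const, nsmul_eq_mul]
        have hsum' : ((T \ S t).card : ℝ) * δ ≤ k * δ := by
          apply mul_le_mul_of_nonneg_right _ hδ0
          exact_mod_cast hcard
        have hmain : γ * (F T - F (S t)) ≤ k * δ := by
          have h1 : γ * (F T - F (S t)) ≤ γ * (F (S t ∪ (T \ S t)) - F (S t)) := by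
            apply mul_le_mul_of_nonneg_left _ (le_of_lt hγ0)
            linarith
          linarith
        have hratio : γ / k * (F T - F (S t)) ≤ δ := by
          rw [div_mul_eq_mul_div, div_le_iff₀ hkR]
          linarith
        have hstep2 : F T - F (S (t+1)) ≤ c * (F T - F (S t)) := by
          have hexp : F T - F (S (t+1)) = (F T - F (S t)) - δ := by
            simp only [hδ]; ring
          rw [hexp, hc]
          nlinarith
        calc F T - F (S (t+1)) ≤ c * (F T - F (S t)) := hstep2
          _ ≤ c * (c ^ t * F T) := mul_le_mul_of_nonneg_left ih' hc0
          _ = c ^ (t+1) * F T := by ring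
    have hkey := key k le_rfl
    have hck : c ^ k ≤ Real.exp (-γ) := by
      have h1 : c ≤ Real.exp (-(γ/k)) := by
        have := Real.add_one_le_exp (-(γ/k))
        simp only [hc]; linarith
      calc c ^ k ≤ Real.exp (-(γ/k)) ^ k := pow_le_pow_left₀ hc0 h1 k
        _ = Real.exp (k * (-(γ/k))) := (Real.exp_nat_mul _ k).symm
        _ = Real.exp (-γ) := by
            congr 1
            field_simp
      done
    have hFT0 := hnonneg T
    have : c ^ k * F T ≤ Real.exp (-γ) * F T :=
      mul_le_mul_of_nonneg_right hck hFT0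
    linarith
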